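/- (Weighted reduction preserves inclusion) Let R ∈ ℝ^{n×r}, n ≤ q ≤ r, and let R = [R_a R_b] be any column partition with R_a ∈ ℝ^{n×(q−n)} and R_b ∈ ℝ^{n×(r−q+n)}. Define the reduced generator matrix R' = [R_a, b(R_b)] where b(R_b) = diag(|R_b|·𝟙). Then ⟨c, R⟩ ⊆ ⟨c, R'⟩ for any center c ∈ ℝⁿ. -/

import Mathlib

open Matrix

/-- The zonotope with center `c` and generator matrix `R`. -/
def zonotope {d ι : Type*} [Fintype ι] (c : d → ℝ) (R : Matrix d ι ℝ) :
    Set (d → ℝ) :=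
  {z | ∃ u : ι → ℝ, (∀ j, |u j| ≤ 1) ∧ z = c + R.mulVec u}

theorem weighted_reduction_preserves_inclusion
    {n q r : ℕ} (hnq : n ≤ q) (hqr : q ≤ r)
    (c : Fin n → ℝ)
    (Ra : Matrix (Fin n) (Fin (q - n)) ℝ)
    (Rb : Matrix (Fin n) (Fin (r - q + n)) ℝ) :
    zonotope c (Matrix.fromCols Ra Rb) ⊆
      zonotope c
        (Matrix.fromCols Ra (Matrix.diagonal fun i => ∑ j, |Rb i j|)) := by
  rintro z ⟨u, hu, rfl⟩
  set s : Fin n → ℝ := fun i => ∑ j, |Rb i j| with hs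
  have hsnn : ∀ i, 0 ≤ s i := fun i => Finset.sum_nonneg fun j _ => abs_nonneg _
  set v : Fin n → ℝ := fun i => if s i = 0 then 0 else (Rb.mulVec (u ∘ Sum.inr) i) / s i with hv
  have hbound : ∀ i, |Rb.mulVec (u ∘ Sum.inr) i| ≤ s i := by
    intro i
    simp only [mulVec, dotProduct]
    calc |∑ j, Rb i j * (u ∘ Sum.inr) j| ≤ ∑ j, |Rb i j * u (Sum.inr j)| :=
          Finset.abs_sum_le_sum_abs _ _
      _ ≤ ∑ j, |Rb i j| := by
          apply Finset.sum_le_sum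
          intro j _
          rw [abs_mul]
          exact mul_le_of_le_one_right (abs_nonneg _) (hu (Sum.inr j))
  refine ⟨Sum.elim (u ∘ Sum.inl) v, ?_, ?_⟩
  · rintro (j | i)
    · exact hu (Sum.inl j)
    · simp only [Sum.elim_inr, hv]
      split_ifs with h
      · simp
      · rw [abs_div, abs_of_nonneg (hsnn i)]
        exact div_le_one_of_le₀ (hbound i) (hsnn i)
  · congr 1
    have h1 : u = Sum.elim (u ∘ Sum.inl) (u ∘ Sum.inr) := by
      ext (j | j) <;> rfl
    rw [h1, fromCols_mulVec_sumElim, fromCols_mulVec_sumElim]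
    congr 1
    ext i
    rw [mulVec_diagonal]
    simp only [hv]
    split_ifs with h
    · have : Rb.mulVec (u ∘ Sum.inr) i = 0 := by
        have := hbound i
        rw [h] at this
        exact abs_nonpos_iff.mp this
      simp [this]
    · field_simp
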